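/- arXiv:2012.07031 — 2 statements merged into one kernel-verified Lean document; each statement's English description precedes it below -/
import Mathlib

section
/- Let F_∞ : ℝ^N × ℝ → ℝ be measurable with |F_∞(x,t)| ≤ (c₀/2)t² for all (x,t) and F_∞(x,t)/t² → 0 as |t| → ∞ uniformly in x. Let (u_n), (v̄_n) be measurable functions on a ball B_R ⊂ ℝ^N with u_n = ‖u_n‖·v̄_n where ‖u_n‖ → +∞, v̄_n → v̄ a.e. in B_R, and v̄_n → v̄ in L²(B_R). Then ∫_{B_R} F_∞(x,u_n)/‖u_n‖² dx → 0. -/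
open MeasureTheory Filter

/-- if `|F_∞(x,t)| ≤ (c₀/2)t²`, `F_∞(x,t)/t² → 0` as `|t| → ∞` uniformly in
`x`, and `u_n = s_n·v̄_n` with `s_n = ‖u_n‖ → ∞`, `v̄_n → v̄` a.e. and in `L²(B_R)`, then
`∫_{B_R} F_∞(x,u_n)/s_n² dx → 0`. -/
theorem stmt5 {N : ℕ} (R : ℝ) (hR : 0 < R)
    (F : EuclideanSpace ℝ (Fin N) → ℝ → ℝ) (c0 : ℝ)
    (hFmeas : Measurable (Function.uncurry F))
    (hFb : ∀ x t, |F x t| ≤ c0 / 2 * t ^ 2)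
    (hFlim : ∀ ε > 0, ∃ M : ℝ, ∀ x t, M ≤ |t| → |F x t| ≤ ε * t ^ 2)
    (s : ℕ → ℝ) (hs : Tendsto s atTop atTop)
    (vb : ℕ → EuclideanSpace ℝ (Fin N) → ℝ) (v : EuclideanSpace ℝ (Fin N) → ℝ)
    (hvbmeas : ∀ n, Measurable (vb n)) (hvmeas : Measurable v)
    (hvbL2 : ∀ n, MemLp (vb n) 2 (volume.restrict (Metric.ball 0 R)))
    (hvL2 : MemLp v 2 (volume.restrict (Metric.ball 0 R)))
    (u : ℕ → EuclideanSpace ℝ (Fin N) → ℝ) (hu : ∀ n x, u n x = s n * vb n x)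
    (hae : ∀ᵐ x ∂(volume.restrict (Metric.ball (0 : EuclideanSpace ℝ (Fin N)) R)),
      Tendsto (fun n => vb n x) atTop (nhds (v x)))
    (hL2 : Tendsto (fun n => ∫ x in Metric.ball (0 : EuclideanSpace ℝ (Fin N)) R,
      (vb n x - v x) ^ 2) atTop (nhds 0)) :
    Tendsto (fun n => ∫ x in Metric.ball (0 : EuclideanSpace ℝ (Fin N)) R,
      F x (u n x) / (s n) ^ 2) atTop (nhds 0) := by
  set μ := volume.restrict (Metric.ball (0 : EuclideanSpace ℝ (Fin N)) R) with hμdef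
  have hfin : IsFiniteMeasure μ := by
    constructor
    rw [hμdef, Measure.restrict_apply_univ]
    exact measure_ball_lt_top
  have hc0 : 0 ≤ c0 := by
    have h1 := hFb 0 1
    have h0 : (0:ℝ) ≤ |F 0 1| := abs_nonneg _
    nlinarith
  have hvbsq : ∀ n, Integrable (fun x => vb n x ^ 2) μ := fun n =>
    (hvbL2 n).integrable_sq
  have hvsq : Integrable (fun x => v x ^ 2) μ := hvL2.integrable_sq
  have hdiffsq : ∀ n, Integrable (fun x => (vb n x - v x) ^ 2) μ := fun n =>
    ((hvbL2 n).sub hvL2).integrable_sq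
  -- eventual bound on ∫ vb n ^ 2
  set C : ℝ := 2 * (∫ x, v x ^ 2 ∂μ) + 2 with hCdef
  have hvsq_nonneg : 0 ≤ ∫ x, v x ^ 2 ∂μ := integral_nonneg fun x => sq_nonneg _
  have hCpos : 0 < C := by positivity
  have hC : ∀ᶠ n in atTop, ∫ x, vb n x ^ 2 ∂μ ≤ C := by
    have h1 : ∀ᶠ n in atTop, ∫ x, (vb n x - v x) ^ 2 ∂μ < 1 := by
      have := hL2.eventually (gt_mem_nhds (show (0:ℝ) < 1 by norm_num))
      exact this
    filter_upwards [h1] with n hn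
    have hptw : ∀ x, vb n x ^ 2 ≤ 2 * (vb n x - v x) ^ 2 + 2 * v x ^ 2 := by
      intro x; nlinarith [sq_nonneg (vb n x - 2 * v x)]
    have hintg : Integrable (fun x => 2 * (vb n x - v x) ^ 2 + 2 * v x ^ 2) μ :=
      ((hdiffsq n).const_mul 2).add (hvsq.const_mul 2)
    have h2 : ∫ x, vb n x ^ 2 ∂μ ≤ ∫ x, (2 * (vb n x - v x) ^ 2 + 2 * v x ^ 2) ∂μ :=
      integral_mono_of_nonneg (Eventually.of_forall fun x => sq_nonneg _) hintg
        (Eventually.of_forall hptw)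
    rw [integral_add ((hdiffsq n).const_mul 2) (hvsq.const_mul 2),
      integral_const_mul, integral_const_mul] at h2
    linarith
  -- main estimate
  rw [NormedAddCommGroup.tendsto_nhds_zero]
  intro ε hε
  set ε' : ℝ := ε / (2 * C) with hε'def
  have hε' : 0 < ε' := by positivity
  obtain ⟨M, hM⟩ := hFlim ε' hε'
  set M' : ℝ := max M 0 with hM'def
  have hM'0 : 0 ≤ M' := le_max_right _ _
  -- second term tends to 0
  have hs2top : Tendsto (fun n => s n ^ 2) atTop atTop := by
    have := hs.atTop_mul_atTop₀ hs
    simpa [pow_two] using this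
  have hT : Tendsto (fun n => c0 / 2 * M' ^ 2 / s n ^ 2 * (μ Set.univ).toReal)
      atTop (nhds 0) := by
    have h1 : Tendsto (fun n => c0 / 2 * M' ^ 2 / s n ^ 2) atTop (nhds 0) :=
      Tendsto.div_atTop tendsto_const_nhds hs2top
    simpa using h1.mul_const (μ Set.univ).toReal
  have hTev : ∀ᶠ n in atTop,
      c0 / 2 * M' ^ 2 / s n ^ 2 * (μ Set.univ).toReal < ε / 2 := by
    have := hT.eventually (gt_mem_nhds (show (0:ℝ) < ε / 2 by positivity))
    exact this
  have hsev : ∀ᶠ n in atTop, 1 ≤ s n := hs.eventually_ge_atTop 1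
  filter_upwards [hC, hTev, hsev] with n hCn hTn hsn
  have hs0 : (0:ℝ) < s n := lt_of_lt_of_le one_pos hsn
  have hs2 : (0:ℝ) < s n ^ 2 := by positivity
  -- pointwise bound
  have key : ∀ x, ‖F x (u n x) / s n ^ 2‖ ≤
      ε' * vb n x ^ 2 + c0 / 2 * M' ^ 2 / s n ^ 2 := by
    intro x
    rw [Real.norm_eq_abs, abs_div, abs_of_pos hs2]
    rcases le_or_gt M' |u n x| with h | h
    · have h1 : |F x (u n x)| ≤ ε' * (u n x) ^ 2 :=
        hM _ _ (le_trans (le_max_left M 0) h)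
      have hu2 : (u n x) ^ 2 = s n ^ 2 * vb n x ^ 2 := by rw [hu]; ring
      have h2 : |F x (u n x)| / s n ^ 2 ≤ ε' * (u n x) ^ 2 / s n ^ 2 := by
        gcongr
      have h3 : ε' * (u n x) ^ 2 / s n ^ 2 = ε' * vb n x ^ 2 := by
        rw [hu2]; field_simp
      have h4 : 0 ≤ c0 / 2 * M' ^ 2 / s n ^ 2 := by positivity
      linarith
    · have hu2 : (u n x) ^ 2 ≤ M' ^ 2 := by
        nlinarith [abs_nonneg (u n x), sq_abs (u n x)]
      have h1 : |F x (u n x)| ≤ c0 / 2 * M' ^ 2 := by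
        have := hFb x (u n x)
        nlinarith
      have h2 : |F x (u n x)| / s n ^ 2 ≤ c0 / 2 * M' ^ 2 / s n ^ 2 := by
        gcongr
      have h4 : 0 ≤ ε' * vb n x ^ 2 := by positivity
      linarith
  -- integrate
  have hg : Integrable (fun x => ε' * vb n x ^ 2 + c0 / 2 * M' ^ 2 / s n ^ 2) μ :=
    ((hvbsq n).const_mul ε').add (integrable_const _)
  have hnormint : ∫ x, ‖F x (u n x) / s n ^ 2‖ ∂μ ≤
      ε' * (∫ x, vb n x ^ 2 ∂μ) + c0 / 2 * M' ^ 2 / s n ^ 2 * (μ Set.univ).toReal := by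
    have h1 : ∫ x, ‖F x (u n x) / s n ^ 2‖ ∂μ ≤
        ∫ x, (ε' * vb n x ^ 2 + c0 / 2 * M' ^ 2 / s n ^ 2) ∂μ :=
      integral_mono_of_nonneg (Eventually.of_forall fun x => norm_nonneg _) hg
        (Eventually.of_forall key)
    rw [integral_add ((hvbsq n).const_mul ε') (integrable_const _),
      integral_const_mul, integral_const, smul_eq_mul] at h1
    exact le_of_le_of_eq h1 (by rw [measureReal_def]; ring)
  have hnorm : ‖∫ x, F x (u n x) / s n ^ 2 ∂μ‖ ≤
      ∫ x, ‖F x (u n x) / s n ^ 2‖ ∂μ := norm_integral_le_integral_norm _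
  have hfinal : ε' * (∫ x, vb n x ^ 2 ∂μ) ≤ ε / 2 := by
    have : ε' * (∫ x, vb n x ^ 2 ∂μ) ≤ ε' * C := by
      exact mul_le_mul_of_nonneg_left hCn hε'.le
    have hC0 : C ≠ 0 := ne_of_gt hCpos
    have hεC : ε' * C = ε / 2 := by
      rw [hε'def]; field_simp
    calc ε' * (∫ x, vb n x ^ 2 ∂μ) ≤ ε' * C := this
      _ = ε / 2 := hεC
  calc ‖∫ x, F x (u n x) / s n ^ 2 ∂μ‖
      ≤ ∫ x, ‖F x (u n x) / s n ^ 2‖ ∂μ := hnorm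
    _ ≤ ε' * (∫ x, vb n x ^ 2 ∂μ) + c0 / 2 * M' ^ 2 / s n ^ 2 * (μ Set.univ).toReal :=
        hnormint
    _ < ε / 2 + ε / 2 := by
        apply add_lt_add_of_le_of_lt hfinal hTn
    _ = ε := by ring
end

section
/- Let g : ℝ^N × ℝ → ℝ be measurable with |g(x,t)| ≤ c₀|t| for all (x,t), and g(x,t)/t → 0 as |t| → ∞ uniformly in x. Let (ũ_n), (ṽ_n) be measurable with ũ_n(x) = ṽ_n(x)·s_n where s_n → +∞, ṽ_n → ṽ a.e., φ ∈ C_c^∞(ℝ^N), and suppose |ṽ_n||φ| ≤ h a.e. for some h ∈ L¹(ℝ^N). Then ∫_{ℝ^N} |g(x, ũ_n(x))/ũ_n(x)| · |ṽ_n(x) φ(x)| dx → 0. -/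
open MeasureTheory Filter

/-- if `|g(x,t)| ≤ c₀|t|`, `g(x,t)/t → 0` uniformly as `|t| → ∞`,
`ũ_n = s_n·ṽ_n` with `s_n → ∞` and `ṽ_n → ṽ` a.e., and `|ṽ_n||φ| ≤ h ∈ L¹`, then
`∫ |g(x,ũ_n)/ũ_n|·|ṽ_n φ| dx → 0`. -/
theorem stmt17 {N : ℕ} (g : EuclideanSpace ℝ (Fin N) → ℝ → ℝ) (c0 : ℝ) (hc0 : 0 < c0)
    (hgmeas : Measurable (Function.uncurry g))
    (hgb : ∀ x t, |g x t| ≤ c0 * |t|)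
    (hglim : ∀ ε > 0, ∃ M : ℝ, ∀ x t, M ≤ |t| → |g x t| ≤ ε * |t|)
    (s : ℕ → ℝ) (hs : Tendsto s atTop atTop)
    (vt : ℕ → EuclideanSpace ℝ (Fin N) → ℝ) (v : EuclideanSpace ℝ (Fin N) → ℝ)
    (hvtmeas : ∀ n, Measurable (vt n)) (hvmeas : Measurable v)
    (ut : ℕ → EuclideanSpace ℝ (Fin N) → ℝ) (hut : ∀ n x, ut n x = s n * vt n x)
    (hae : ∀ᵐ x ∂volume, Tendsto (fun n => vt n x) atTop (nhds (v x)))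
    (φ : EuclideanSpace ℝ (Fin N) → ℝ) (hφc : Continuous φ) (hφs : HasCompactSupport φ)
    (h : EuclideanSpace ℝ (Fin N) → ℝ) (hhint : Integrable h)
    (hdom : ∀ n, ∀ᵐ x ∂volume, |vt n x| * |φ x| ≤ h x) :
    Tendsto (fun n => ∫ x, |g x (ut n x) / ut n x| * |vt n x * φ x|) atTop (nhds 0) := by
  -- quotient bound
  have hq : ∀ x t, |g x t / t| ≤ c0 := by
    intro x t
    rcases eq_or_ne t 0 with rfl | ht
    · simp [hc0.le]
    · rw [abs_div, div_le_iff₀ (abs_pos.mpr ht)]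
      exact hgb x t
  have hmeas : ∀ n, AEStronglyMeasurable
      (fun x => |g x (ut n x) / ut n x| * |vt n x * φ x|) volume := by
    intro n
    have hutm : Measurable (ut n) := by
      have : ut n = fun x => s n * vt n x := funext (hut n)
      rw [this]; exact (hvtmeas n).const_mul _
    have h1 : Measurable (fun x => g x (ut n x)) :=
      hgmeas.comp (measurable_id.prodMk hutm)
    exact ((h1.div hutm).abs.mul ((hvtmeas n).mul hφc.measurable).abs).aestronglyMeasurable
  have key := tendsto_integral_of_dominated_convergence (μ := volume)
      (F := fun n x => |g x (ut n x) / ut n x| * |vt n x * φ x|)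
      (f := fun _ => (0:ℝ)) (bound := fun x => c0 * h x) hmeas
      (hhint.const_mul c0) ?_ ?_
  · simpa using key
  · -- norm bound
    intro n
    filter_upwards [hdom n] with x hx
    rw [Real.norm_eq_abs, abs_of_nonneg (by positivity : (0:ℝ) ≤ _)]
    calc |g x (ut n x) / ut n x| * |vt n x * φ x|
        ≤ c0 * |vt n x * φ x| := mul_le_mul_of_nonneg_right (hq x _) (abs_nonneg _)
      _ ≤ c0 * h x := by rw [abs_mul]; exact mul_le_mul_of_nonneg_left hx hc0.le
  · -- pointwise convergence
    filter_upwards [hae, ae_all_iff.mpr hdom] with x hx hxd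
    have hh0 : 0 ≤ h x := le_trans (by positivity) (hxd 0)
    by_cases hv : v x = 0
    · -- squeeze by c0 * |vt n x * φ x|
      have hb : ∀ n, |(|g x (ut n x) / ut n x| * |vt n x * φ x|)| ≤ c0 * |vt n x * φ x| := by
        intro n
        rw [abs_of_nonneg (by positivity)]
        exact mul_le_mul_of_nonneg_right (hq x _) (abs_nonneg _)
      have hlim : Tendsto (fun n => c0 * |vt n x * φ x|) atTop (nhds 0) := by
        have : Tendsto (fun n => vt n x * φ x) atTop (nhds 0) := by
          simpa [hv] using hx.mul_const (φ x)
        simpa using (this.abs.const_mul c0)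
      exact squeeze_zero_norm hb hlim
    · -- |ut n x| → ∞
      have habs : Tendsto (fun n => |vt n x|) atTop (nhds |v x|) := hx.abs
      have hsu : Tendsto (fun n => |s n| * |vt n x|) atTop atTop := by
        have hsa : Tendsto (fun n => |s n|) atTop atTop :=
          tendsto_abs_atTop_atTop.comp hs
        exact hsa.atTop_mul_pos (abs_pos.mpr hv) habs
      have hutt : Tendsto (fun n => |ut n x|) atTop atTop := by
        have : (fun n => |ut n x|) = fun n => |s n| * |vt n x| := by
          funext n; rw [hut n x, abs_mul]
        rw [this]; exact hsu
      rw [NormedAddCommGroup.tendsto_nhds_zero]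
      intro ε hε
      set ε' := ε / (2 * (h x + 1)) with hε'def
      have hε' : 0 < ε' := by positivity
      obtain ⟨M, hM⟩ := hglim ε' hε'
      filter_upwards [hutt.eventually_ge_atTop (max M 1)] with n hn
      have hMle : M ≤ |ut n x| := le_trans (le_max_left _ _) hn
      have hupos : (0:ℝ) < |ut n x| := lt_of_lt_of_le one_pos (le_trans (le_max_right _ _) hn)
      have hq2 : |g x (ut n x) / ut n x| ≤ ε' := by
        rw [abs_div, div_le_iff₀ hupos]
        exact hM x _ hMle
      have : |g x (ut n x) / ut n x| * |vt n x * φ x| ≤ ε' * h x := by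
        apply mul_le_mul hq2 _ (abs_nonneg _) hε'.le
        rw [abs_mul]; exact hxd n
      calc ‖|g x (ut n x) / ut n x| * |vt n x * φ x|‖
          = |g x (ut n x) / ut n x| * |vt n x * φ x| := by
            rw [Real.norm_eq_abs, abs_of_nonneg (by positivity)]
        _ ≤ ε' * h x := this
        _ ≤ ε' * (h x + 1) := by nlinarith
        _ = ε / 2 := by rw [hε'def]; field_simp
        _ < ε := by linarith
end
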